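/- Let L₀ be the operator on functions on 𝕊¹ given by L₀σ = −(1/4)∂_θX_c · H(∂_θ(σ ∂_θX_c)) + (1/8π)∫_{𝕊¹} σ(θ')dθ', where X_c(θ) = (cosθ, sinθ) and H is the componentwise periodic Hilbert transform. Then for every n ≥ 1, L₀(sin(nθ)) = −(n/4) sin(nθ) and L₀(cos(nθ)) = −(n/4) cos(nθ), and L₀(1) = 0. -/

import Mathlib

open Real

noncomputable section

abbrev E2 := EuclideanSpace ℝ (Fin 2)

/-- The unit circle `X_c(θ) = (cos θ, sin θ)`. -/
noncomputable def Xc (θ : ℝ) : E2 :=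
  (WithLp.equiv 2 (Fin 2 → ℝ)).symm ![Real.cos θ, Real.sin θ]

/-- Its tangent `∂_θX_c(θ) = (−sin θ, cos θ)`. -/
noncomputable def dXc (θ : ℝ) : E2 :=
  (WithLp.equiv 2 (Fin 2 → ℝ)).symm ![-Real.sin θ, Real.cos θ]

/-- The componentwise periodic Hilbert transform
`(HF)(θ) = (1/2π) p.v.∫_{𝕊¹} cot((θ−θ')/2)F(θ')dθ'`, written as the (absolutely
convergent, for `C¹` data) symmetrized integral. -/
noncomputable def HilV (F : ℝ → E2) (θ : ℝ) : E2 :=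
  (1 / (2 * π)) • ∫ t in (0 : ℝ)..π, Real.cot (t / 2) • (F (θ - t) - F (θ + t))

/-- The unit-circle tension operator
`L₀σ = −(1/4)∂_θX_c · H(∂_θ(σ∂_θX_c)) + (1/8π)∫σ dθ'`. -/
noncomputable def L0 (σ : ℝ → ℝ) (θ : ℝ) : ℝ :=
  -(1 / 4) * (inner ℝ (dXc θ)
      (HilV (fun φ => deriv (fun ψ => σ ψ • dXc ψ) φ) θ) : ℝ)
    + (1 / (8 * π)) * ∫ φ in (0 : ℝ)..(2 * π), σ φ

open MeasureTheory Set intervalIntegral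

/-! ### Scalar integral lemmas -/

lemma sin_half_ne {t : ℝ} (ht : t ∈ Set.Ioc (0:ℝ) π) : Real.sin (t/2) ≠ 0 := by
  have h1 : 0 < t/2 := by linarith [ht.1]
  have h2 : t/2 < π := by have := ht.2; have := Real.pi_pos; linarith
  exact ne_of_gt (Real.sin_pos_of_pos_of_lt_pi h1 h2)

lemma cot_sin_id {k : ℕ} (hk : 1 ≤ k) {t : ℝ} (ht : t ∈ Set.Ioc (0:ℝ) π) :
    Real.cot (t/2) * Real.sin (k*t) =
      1 + Real.cos (k*t) + 2 * ∑ j ∈ Finset.Ico 1 k, Real.cos (j*t) := by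
  have hs := sin_half_ne ht
  induction k with
  | zero => omega
  | succ m ih =>
    rcases Nat.eq_or_lt_of_le hk with h1 | h1
    · have hm : m = 0 := by omega
      subst hm
      have hc : ((0+1:ℕ):ℝ) = 1 := by norm_num
      simp only [hc, one_mul, Finset.Ico_self, Finset.sum_empty, mul_zero, add_zero]
      have ht2 : Real.sin t = 2 * Real.sin (t/2) * Real.cos (t/2) := by
        rw [show t = 2*(t/2) by ring, Real.sin_two_mul]; ring_nf
      have hc2 : Real.cos t = 2 * Real.cos (t/2)^2 - 1 := by
        rw [show t = 2*(t/2) by ring, Real.cos_two_mul]; ring_nf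
      rw [Real.cot_eq_cos_div_sin, ht2, hc2]
      field_simp; ring
    · have hm : 1 ≤ m := by omega
      have key : Real.cot (t/2) * (Real.sin ((m+1:ℕ)*t) - Real.sin ((m:ℕ)*t)) =
          Real.cos ((m:ℕ)*t) + Real.cos ((m+1:ℕ)*t) := by
        rw [Real.sin_sub_sin, Real.cot_eq_cos_div_sin]
        have harg1 : ((m+1:ℕ)*t - (m:ℕ)*t)/2 = t/2 := by push_cast; ring
        have harg2 : ((m+1:ℕ)*t + (m:ℕ)*t)/2 = ((2*m+1:ℕ))*t/2 := by push_cast; ring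
        rw [harg1, harg2]
        have := Real.cos_add_cos ((m:ℝ)*t) ((m+1:ℕ)*t)
        rw [this]
        have e1 : (((m:ℝ)*t + (m+1:ℕ)*t))/2 = ((2*m+1:ℕ))*t/2 := by push_cast; ring
        have e2 : (((m:ℝ)*t - (m+1:ℕ)*t))/2 = -(t/2) := by push_cast; ring
        rw [e1, e2, Real.cos_neg]
        field_simp
      have hsum : ∑ j ∈ Finset.Ico 1 (m+1), Real.cos (j*t)
          = (∑ j ∈ Finset.Ico 1 m, Real.cos (j*t)) + Real.cos ((m:ℕ)*t) := by
        rw [Finset.sum_Ico_succ_top hm]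
      have ihm := ih hm
      have expand : Real.cot (t/2) * Real.sin ((m+1:ℕ)*t)
          = Real.cot (t/2) * Real.sin ((m:ℕ)*t)
            + (Real.cos ((m:ℕ)*t) + Real.cos ((m+1:ℕ)*t)) := by
        rw [← key]; ring
      rw [expand, ihm, hsum]; push_cast; ring

lemma cont_rhs (k : ℕ) : Continuous (fun t : ℝ =>
    1 + Real.cos (k*t) + 2 * ∑ j ∈ Finset.Ico 1 k, Real.cos (j*t)) := by fun_prop

lemma integrable_cot_sin {k : ℕ} (hk : 1 ≤ k) :
    IntervalIntegrable (fun t => Real.cot (t/2) * Real.sin (k*t)) volume 0 π := by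
  rw [intervalIntegrable_iff_integrableOn_Ioc_of_le Real.pi_pos.le]
  refine (((cont_rhs k).integrableOn_Ioc (a := 0) (b := π))).congr_fun ?_ measurableSet_Ioc
  intro t ht
  exact (cot_sin_id hk ht).symm

lemma integral_cos_nat (j : ℕ) (hj : 1 ≤ j) :
    ∫ t in (0:ℝ)..π, Real.cos (j*t) = 0 := by
  have hj0 : (j:ℝ) ≠ 0 := by positivity
  rw [intervalIntegral.integral_comp_mul_left (fun x => Real.cos x) hj0]
  simp [Real.sin_nat_mul_pi]

lemma integral_cot_sin {k : ℕ} (hk : 1 ≤ k) :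
    ∫ t in (0:ℝ)..π, Real.cot (t/2) * Real.sin (k*t) = π := by
  have h1 : ∫ t in (0:ℝ)..π, Real.cot (t/2) * Real.sin (k*t)
      = ∫ t in (0:ℝ)..π, (1 + Real.cos (k*t) + 2 * ∑ j ∈ Finset.Ico 1 k, Real.cos (j*t)) := by
    rw [intervalIntegral.integral_of_le Real.pi_pos.le,
        intervalIntegral.integral_of_le Real.pi_pos.le]
    exact MeasureTheory.setIntegral_congr_fun measurableSet_Ioc (fun t ht => cot_sin_id hk ht)
  rw [h1]
  have hi1 : IntervalIntegrable (fun t : ℝ => 1 + Real.cos (k*t)) volume 0 π := by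
    apply Continuous.intervalIntegrable; fun_prop
  have hi2 : IntervalIntegrable (fun t : ℝ => 2 * ∑ j ∈ Finset.Ico 1 k, Real.cos (j*t)) volume 0 π := by
    apply Continuous.intervalIntegrable; fun_prop
  rw [intervalIntegral.integral_add hi1 hi2]
  have e1 : ∫ t in (0:ℝ)..π, (1 + Real.cos (k*t)) = π := by
    rw [intervalIntegral.integral_add (by apply Continuous.intervalIntegrable; fun_prop)
        (by apply Continuous.intervalIntegrable; fun_prop)]
    rw [integral_cos_nat k hk]
    simp
  have e2 : ∫ t in (0:ℝ)..π, 2 * ∑ j ∈ Finset.Ico 1 k, Real.cos (j*t) = 0 := by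
    rw [intervalIntegral.integral_const_mul]
    rw [intervalIntegral.integral_finset_sum (fun j _ => by apply Continuous.intervalIntegrable; fun_prop)]
    rw [Finset.sum_congr rfl (fun j hj => integral_cos_nat j (Finset.mem_Ico.mp hj).1)]
    simp
  rw [e1, e2]; ring

/-! ### Key Hilbert-type integrals -/

lemma keyCosFun (k : ℕ) (θ : ℝ) :
    (fun t => Real.cot (t/2) * (Real.cos ((k:ℝ)*(θ-t)) - Real.cos ((k:ℝ)*(θ+t))))
      = fun t => (2 * Real.sin ((k:ℝ)*θ)) * (Real.cot (t/2) * Real.sin ((k:ℝ)*t)) := by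
  funext t
  rw [show (k:ℝ)*(θ-t) = (k:ℝ)*θ - (k:ℝ)*t by ring, show (k:ℝ)*(θ+t) = (k:ℝ)*θ + (k:ℝ)*t by ring,
    Real.cos_sub, Real.cos_add]
  ring

lemma keySinFun (k : ℕ) (θ : ℝ) :
    (fun t => Real.cot (t/2) * (Real.sin ((k:ℝ)*(θ-t)) - Real.sin ((k:ℝ)*(θ+t))))
      = fun t => (-2 * Real.cos ((k:ℝ)*θ)) * (Real.cot (t/2) * Real.sin ((k:ℝ)*t)) := by
  funext t
  rw [show (k:ℝ)*(θ-t) = (k:ℝ)*θ - (k:ℝ)*t by ring, show (k:ℝ)*(θ+t) = (k:ℝ)*θ + (k:ℝ)*t by ring,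
    Real.sin_sub, Real.sin_add]
  ring

lemma int_cot_sin_all (k : ℕ) :
    IntervalIntegrable (fun t => Real.cot (t/2) * Real.sin ((k:ℝ)*t)) volume 0 π := by
  rcases Nat.eq_zero_or_pos k with h | h
  · subst h; simp
  · exact integrable_cot_sin h

lemma keyCos (k : ℕ) (θ : ℝ) :
    IntervalIntegrable (fun t => Real.cot (t/2) * (Real.cos ((k:ℝ)*(θ-t)) - Real.cos ((k:ℝ)*(θ+t)))) volume 0 π := by
  rw [keyCosFun]; exact (int_cot_sin_all k).const_mul _

lemma keySin (k : ℕ) (θ : ℝ) :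
    IntervalIntegrable (fun t => Real.cot (t/2) * (Real.sin ((k:ℝ)*(θ-t)) - Real.sin ((k:ℝ)*(θ+t)))) volume 0 π := by
  rw [keySinFun]; exact (int_cot_sin_all k).const_mul _

lemma keyCosVal (k : ℕ) (θ : ℝ) :
    ∫ t in (0:ℝ)..π, Real.cot (t/2) * (Real.cos ((k:ℝ)*(θ-t)) - Real.cos ((k:ℝ)*(θ+t)))
      = 2 * π * Real.sin ((k:ℝ)*θ) * (if k = 0 then 0 else 1) := by
  rw [keyCosFun, intervalIntegral.integral_const_mul]
  rcases Nat.eq_zero_or_pos k with h | h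
  · subst h; simp
  · rw [integral_cot_sin h, if_neg (by omega)]; ring

lemma keySinVal (k : ℕ) (θ : ℝ) :
    ∫ t in (0:ℝ)..π, Real.cot (t/2) * (Real.sin ((k:ℝ)*(θ-t)) - Real.sin ((k:ℝ)*(θ+t)))
      = -2 * π * Real.cos ((k:ℝ)*θ) * (if k = 0 then 0 else 1) := by
  rw [keySinFun, intervalIntegral.integral_const_mul]
  rcases Nat.eq_zero_or_pos k with h | h
  · subst h; simp
  · rw [integral_cot_sin h, if_neg (by omega)]; ring

/-! ### E2 plumbing -/

lemma inner_e2 (a b c d : ℝ) :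
    (inner ℝ ((WithLp.equiv 2 (Fin 2 → ℝ)).symm ![a,b]) ((WithLp.equiv 2 (Fin 2 → ℝ)).symm ![c,d]) : ℝ)
      = a*c + b*d := by
  simp [PiLp.inner_apply, Fin.sum_univ_two, WithLp.equiv_symm_apply, RCLike.inner_apply]; ring

lemma e2_smul (r a b : ℝ) :
    r • (WithLp.equiv 2 (Fin 2 → ℝ)).symm ![a,b]
      = (WithLp.equiv 2 (Fin 2 → ℝ)).symm ![r*a, r*b] := by
  rw [WithLp.equiv_symm_apply, ← WithLp.toLp_smul]
  congr 1
  simp [Matrix.smul_cons, smul_eq_mul]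

lemma e2_sub (a b c d : ℝ) :
    (WithLp.equiv 2 (Fin 2 → ℝ)).symm ![a,b] - (WithLp.equiv 2 (Fin 2 → ℝ)).symm ![c,d]
      = (WithLp.equiv 2 (Fin 2 → ℝ)).symm ![a-c,b-d] := by
  rw [WithLp.equiv_symm_apply, ← WithLp.toLp_sub]
  congr 1
  funext i; fin_cases i <;> simp

lemma e2_split (a b : ℝ) :
    (WithLp.equiv 2 (Fin 2 → ℝ)).symm ![a,b]
      = a • (WithLp.equiv 2 (Fin 2 → ℝ)).symm ![1,0] + b • (WithLp.equiv 2 (Fin 2 → ℝ)).symm ![0,1] := by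
  rw [e2_smul, e2_smul, WithLp.equiv_symm_apply, ← WithLp.toLp_add]
  congr 1
  funext i
  fin_cases i <;> simp

lemma hasDerivAt_e2 {f g : ℝ → ℝ} {f' g' : ℝ} {x : ℝ}
    (hf : HasDerivAt f f' x) (hg : HasDerivAt g g' x) :
    HasDerivAt (fun ψ => (WithLp.equiv 2 (Fin 2 → ℝ)).symm ![f ψ, g ψ])
      ((WithLp.equiv 2 (Fin 2 → ℝ)).symm ![f', g']) x := by
  have hv : HasDerivAt (fun ψ => (![f ψ, g ψ] : Fin 2 → ℝ)) ![f', g'] x := by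
    rw [hasDerivAt_pi]
    intro i
    fin_cases i
    · simpa using hf
    · simpa using hg
  have := ((EuclideanSpace.equiv (Fin 2) ℝ).symm.hasFDerivAt
      (x := ![f x, g x])).comp_hasDerivAt x hv
  exact this

/-- Derivative of `σ • dXc`. -/
lemma derivF (σ σd : ℝ → ℝ) (h : ∀ x, HasDerivAt σ (σd x) x) (φ : ℝ) :
    deriv (fun ψ => σ ψ • dXc ψ) φ
      = (WithLp.equiv 2 (Fin 2 → ℝ)).symm
          ![-(σd φ * Real.sin φ) - σ φ * Real.cos φ,
            σd φ * Real.cos φ - σ φ * Real.sin φ] := by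
  have hrw : (fun ψ => σ ψ • dXc ψ)
      = fun ψ => (WithLp.equiv 2 (Fin 2 → ℝ)).symm ![σ ψ * (-Real.sin ψ), σ ψ * Real.cos ψ] := by
    funext ψ; rw [dXc, e2_smul]
  rw [hrw]
  have h1 : HasDerivAt (fun ψ => σ ψ * (-Real.sin ψ))
      (σd φ * (-Real.sin φ) + σ φ * (-Real.cos φ)) φ :=
    (h φ).mul (Real.hasDerivAt_sin φ).neg
  have h2 : HasDerivAt (fun ψ => σ ψ * Real.cos ψ)
      (σd φ * Real.cos φ + σ φ * (-Real.sin φ)) φ :=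
    (h φ).mul (Real.hasDerivAt_cos φ)
  rw [(hasDerivAt_e2 h1 h2).deriv]
  congr 1
  funext i; fin_cases i <;> (simp; ring)

/-- Master lemma: express the inner product as two scalar integrals. -/
lemma hil_inner (θ : ℝ) (F : ℝ → E2) (P Q : ℝ → ℝ)
    (hF : ∀ φ, F φ = (WithLp.equiv 2 (Fin 2 → ℝ)).symm ![P φ, Q φ])
    (hP : IntervalIntegrable (fun t => Real.cot (t/2) * (P (θ-t) - P (θ+t))) volume 0 π)
    (hQ : IntervalIntegrable (fun t => Real.cot (t/2) * (Q (θ-t) - Q (θ+t))) volume 0 π) :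
    (inner ℝ (dXc θ) (HilV F θ) : ℝ)
      = (1/(2*π)) * (-Real.sin θ * (∫ t in (0:ℝ)..π, Real.cot (t/2) * (P (θ-t) - P (θ+t)))
          + Real.cos θ * ∫ t in (0:ℝ)..π, Real.cot (t/2) * (Q (θ-t) - Q (θ+t))) := by
  have hfun : (fun t => Real.cot (t/2) • (F (θ-t) - F (θ+t)))
      = fun t => (Real.cot (t/2) * (P (θ-t) - P (θ+t))) • (WithLp.equiv 2 (Fin 2 → ℝ)).symm ![1,0]
          + (Real.cot (t/2) * (Q (θ-t) - Q (θ+t))) • (WithLp.equiv 2 (Fin 2 → ℝ)).symm ![0,1] := by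
    funext t
    rw [hF, hF, e2_sub, e2_smul, e2_split]
  rw [HilV, hfun]
  rw [intervalIntegral.integral_add ⟨hP.1.smul_const _, hP.2.smul_const _⟩
      ⟨hQ.1.smul_const _, hQ.2.smul_const _⟩,
    intervalIntegral.integral_smul_const, intervalIntegral.integral_smul_const]
  rw [real_inner_smul_right, inner_add_right, real_inner_smul_right, real_inner_smul_right]
  rw [dXc, inner_e2, inner_e2]
  ring

/-! ### Mean-value integrals -/

lemma integral_sin_period (n : ℕ) (hn : 1 ≤ n) :
    ∫ φ in (0:ℝ)..(2*π), Real.sin ((n:ℝ)*φ) = 0 := by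
  have hn0 : (n:ℝ) ≠ 0 := by positivity
  rw [intervalIntegral.integral_comp_mul_left (fun x => Real.sin x) hn0]
  have : (n:ℝ)*(2*π) = ((2*n:ℕ):ℝ)*π := by push_cast; ring
  rw [integral_sin]
  have : Real.cos (((2*n:ℕ):ℝ)*π) = 1 := by
    rw [show ((2*n:ℕ):ℝ)*π = (n:ℝ)*(2*π) by push_cast; ring]
    exact Real.cos_nat_mul_two_pi n
  simp [this]

lemma integral_cos_period (n : ℕ) (hn : 1 ≤ n) :
    ∫ φ in (0:ℝ)..(2*π), Real.cos ((n:ℝ)*φ) = 0 := by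
  have hn0 : (n:ℝ) ≠ 0 := by positivity
  rw [intervalIntegral.integral_comp_mul_left (fun x => Real.cos x) hn0]
  rw [integral_cos]
  have : Real.sin ((n:ℝ)*(2*π)) = 0 := by
    rw [show (n:ℝ)*(2*π) = ((2*n:ℕ):ℝ)*π by push_cast; ring]
    exact Real.sin_nat_mul_pi (2*n)
  simp [this]


lemma case_sin (n : ℕ) (hn : 1 ≤ n) (θ : ℝ) :
    L0 (fun φ => Real.sin (n * φ)) θ = -((n : ℝ) / 4) * Real.sin (n * θ) := by
  have c1 : ((n+1:ℕ):ℝ) = (n:ℝ)+1 := by push_cast; ring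
  have c2 : ((n-1:ℕ):ℝ) = (n:ℝ)-1 := by
    rw [Nat.cast_sub hn]; norm_num
  set σ : ℝ → ℝ := fun φ => Real.sin (n * φ) with hσ
  set σd : ℝ → ℝ := fun φ => Real.cos ((n:ℝ)*φ) * (n:ℝ) with hσd
  have hder : ∀ x, HasDerivAt σ (σd x) x := by
    intro x
    simpa using ((hasDerivAt_id x).const_mul (n:ℝ)).sin
  set P : ℝ → ℝ := fun φ => -(σd φ * Real.sin φ) - σ φ * Real.cos φ with hP
  set Q : ℝ → ℝ := fun φ => σd φ * Real.cos φ - σ φ * Real.sin φ with hQ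
  have hF : ∀ φ, (fun φ => deriv (fun ψ => σ ψ • dXc ψ) φ) φ
      = (WithLp.equiv 2 (Fin 2 → ℝ)).symm ![P φ, Q φ] := derivF σ σd hder
  have funP : (fun t => Real.cot (t/2) * (P (θ-t) - P (θ+t)))
      = fun t => (-(((n:ℝ)+1)/2)) * (Real.cot (t/2) * (Real.sin (((n+1:ℕ):ℝ)*(θ-t)) - Real.sin (((n+1:ℕ):ℝ)*(θ+t))))
          + (((n:ℝ)-1)/2) * (Real.cot (t/2) * (Real.sin (((n-1:ℕ):ℝ)*(θ-t)) - Real.sin (((n-1:ℕ):ℝ)*(θ+t)))) := by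
    funext t
    rw [c1, c2]
    simp only [hP, hσ, hσd]
    simp only [mul_sub, mul_add, add_mul, sub_mul, one_mul,
      Real.sin_add, Real.cos_add, Real.sin_sub, Real.cos_sub]
    push_cast
    ring
  have funQ : (fun t => Real.cot (t/2) * (Q (θ-t) - Q (θ+t)))
      = fun t => ((((n:ℝ)+1)/2)) * (Real.cot (t/2) * (Real.cos (((n+1:ℕ):ℝ)*(θ-t)) - Real.cos (((n+1:ℕ):ℝ)*(θ+t))))
          + (((n:ℝ)-1)/2) * (Real.cot (t/2) * (Real.cos (((n-1:ℕ):ℝ)*(θ-t)) - Real.cos (((n-1:ℕ):ℝ)*(θ+t)))) := by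
    funext t
    rw [c1, c2]
    simp only [hQ, hσ, hσd]
    simp only [mul_sub, mul_add, add_mul, sub_mul, one_mul,
      Real.sin_add, Real.cos_add, Real.sin_sub, Real.cos_sub]
    push_cast
    ring
  have hPint : IntervalIntegrable (fun t => Real.cot (t/2) * (P (θ-t) - P (θ+t))) volume 0 π := by
    rw [funP]
    exact ((keySin (n+1) θ).const_mul _).add ((keySin (n-1) θ).const_mul _)
  have hQint : IntervalIntegrable (fun t => Real.cot (t/2) * (Q (θ-t) - Q (θ+t))) volume 0 π := by
    rw [funQ]
    exact ((keyCos (n+1) θ).const_mul _).add ((keyCos (n-1) θ).const_mul _)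
  have IPval : ∫ t in (0:ℝ)..π, Real.cot (t/2) * (P (θ-t) - P (θ+t))
      = (-(((n:ℝ)+1)/2)) * (-2 * π * Real.cos (((n+1:ℕ):ℝ)*θ) * (if n+1 = 0 then 0 else 1))
        + (((n:ℝ)-1)/2) * (-2 * π * Real.cos (((n-1:ℕ):ℝ)*θ) * (if n-1 = 0 then 0 else 1)) := by
    rw [funP, intervalIntegral.integral_add ((keySin (n+1) θ).const_mul _) ((keySin (n-1) θ).const_mul _),
      intervalIntegral.integral_const_mul, intervalIntegral.integral_const_mul,
      keySinVal, keySinVal]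
  have IQval : ∫ t in (0:ℝ)..π, Real.cot (t/2) * (Q (θ-t) - Q (θ+t))
      = ((((n:ℝ)+1)/2)) * (2 * π * Real.sin (((n+1:ℕ):ℝ)*θ) * (if n+1 = 0 then 0 else 1))
        + (((n:ℝ)-1)/2) * (2 * π * Real.sin (((n-1:ℕ):ℝ)*θ) * (if n-1 = 0 then 0 else 1)) := by
    rw [funQ, intervalIntegral.integral_add ((keyCos (n+1) θ).const_mul _) ((keyCos (n-1) θ).const_mul _),
      intervalIntegral.integral_const_mul, intervalIntegral.integral_const_mul,
      keyCosVal, keyCosVal]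
  rw [L0]
  rw [hil_inner θ _ P Q hF hPint hQint, IPval, IQval]
  rw [show (∫ φ in (0:ℝ)..(2*π), σ φ) = 0 from integral_sin_period n hn]
  rw [if_neg (by omega : ¬ n+1 = 0), c1, c2]
  have h1 : Real.sin ((n:ℝ)*θ) = Real.sin (((n:ℝ)+1)*θ) * Real.cos θ - Real.cos (((n:ℝ)+1)*θ) * Real.sin θ := by
    rw [← Real.sin_sub]; congr 1; ring
  have h2 : Real.sin ((n:ℝ)*θ) = Real.sin (((n:ℝ)-1)*θ) * Real.cos θ + Real.cos (((n:ℝ)-1)*θ) * Real.sin θ := by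
    rw [← Real.sin_add]; congr 1; ring
  have hπ : (π:ℝ) ≠ 0 := Real.pi_ne_zero
  rcases Nat.lt_or_ge n 2 with h | h
  · have hn1 : n = 1 := by omega
    subst hn1
    rw [if_pos (by norm_num)]
    push_cast at h1 h2 ⊢
    field_simp
    simp only [one_mul] at h1 h2 ⊢
    linear_combination (norm := ring_nf) (π * 16) * h1
  · rw [if_neg (by omega : ¬ n-1 = 0)]
    push_cast at h1 h2 ⊢
    field_simp
    linear_combination (norm := ring_nf) (8*π*((n:ℝ)+1)) * h1 + (8*π*((n:ℝ)-1)) * h2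

lemma case_cos (n : ℕ) (hn : 1 ≤ n) (θ : ℝ) :
    L0 (fun φ => Real.cos (n * φ)) θ = -((n : ℝ) / 4) * Real.cos (n * θ) := by
  have c1 : ((n+1:ℕ):ℝ) = (n:ℝ)+1 := by push_cast; ring
  have c2 : ((n-1:ℕ):ℝ) = (n:ℝ)-1 := by rw [Nat.cast_sub hn]; norm_num
  set σ : ℝ → ℝ := fun φ => Real.cos (n * φ) with hσ
  set σd : ℝ → ℝ := fun φ => -(Real.sin ((n:ℝ)*φ) * (n:ℝ)) with hσd
  have hder : ∀ x, HasDerivAt σ (σd x) x := by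
    intro x
    simpa using ((hasDerivAt_id x).const_mul (n:ℝ)).cos
  set P : ℝ → ℝ := fun φ => -(σd φ * Real.sin φ) - σ φ * Real.cos φ with hP
  set Q : ℝ → ℝ := fun φ => σd φ * Real.cos φ - σ φ * Real.sin φ with hQ
  have hF : ∀ φ, (fun φ => deriv (fun ψ => σ ψ • dXc ψ) φ) φ
      = (WithLp.equiv 2 (Fin 2 → ℝ)).symm ![P φ, Q φ] := derivF σ σd hder
  have funP : (fun t => Real.cot (t/2) * (P (θ-t) - P (θ+t)))
      = fun t => (-(((n:ℝ)+1)/2)) * (Real.cot (t/2) * (Real.cos (((n+1:ℕ):ℝ)*(θ-t)) - Real.cos (((n+1:ℕ):ℝ)*(θ+t))))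
          + (((n:ℝ)-1)/2) * (Real.cot (t/2) * (Real.cos (((n-1:ℕ):ℝ)*(θ-t)) - Real.cos (((n-1:ℕ):ℝ)*(θ+t)))) := by
    funext t
    rw [c1, c2]
    simp only [hP, hσ, hσd]
    simp only [mul_sub, mul_add, add_mul, sub_mul, one_mul,
      Real.sin_add, Real.cos_add, Real.sin_sub, Real.cos_sub]
    push_cast
    ring
  have funQ : (fun t => Real.cot (t/2) * (Q (θ-t) - Q (θ+t)))
      = fun t => (-(((n:ℝ)+1)/2)) * (Real.cot (t/2) * (Real.sin (((n+1:ℕ):ℝ)*(θ-t)) - Real.sin (((n+1:ℕ):ℝ)*(θ+t))))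
          + (-(((n:ℝ)-1)/2)) * (Real.cot (t/2) * (Real.sin (((n-1:ℕ):ℝ)*(θ-t)) - Real.sin (((n-1:ℕ):ℝ)*(θ+t)))) := by
    funext t
    rw [c1, c2]
    simp only [hQ, hσ, hσd]
    simp only [mul_sub, mul_add, add_mul, sub_mul, one_mul,
      Real.sin_add, Real.cos_add, Real.sin_sub, Real.cos_sub]
    push_cast
    ring
  have hPint : IntervalIntegrable (fun t => Real.cot (t/2) * (P (θ-t) - P (θ+t))) volume 0 π := by
    rw [funP]
    exact ((keyCos (n+1) θ).const_mul _).add ((keyCos (n-1) θ).const_mul _)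
  have hQint : IntervalIntegrable (fun t => Real.cot (t/2) * (Q (θ-t) - Q (θ+t))) volume 0 π := by
    rw [funQ]
    exact ((keySin (n+1) θ).const_mul _).add ((keySin (n-1) θ).const_mul _)
  have IPval : ∫ t in (0:ℝ)..π, Real.cot (t/2) * (P (θ-t) - P (θ+t))
      = (-(((n:ℝ)+1)/2)) * (2 * π * Real.sin (((n+1:ℕ):ℝ)*θ) * (if n+1 = 0 then 0 else 1))
        + (((n:ℝ)-1)/2) * (2 * π * Real.sin (((n-1:ℕ):ℝ)*θ) * (if n-1 = 0 then 0 else 1)) := by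
    rw [funP, intervalIntegral.integral_add ((keyCos (n+1) θ).const_mul _) ((keyCos (n-1) θ).const_mul _),
      intervalIntegral.integral_const_mul, intervalIntegral.integral_const_mul,
      keyCosVal, keyCosVal]
  have IQval : ∫ t in (0:ℝ)..π, Real.cot (t/2) * (Q (θ-t) - Q (θ+t))
      = (-(((n:ℝ)+1)/2)) * (-2 * π * Real.cos (((n+1:ℕ):ℝ)*θ) * (if n+1 = 0 then 0 else 1))
        + (-(((n:ℝ)-1)/2)) * (-2 * π * Real.cos (((n-1:ℕ):ℝ)*θ) * (if n-1 = 0 then 0 else 1)) := by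
    rw [funQ, intervalIntegral.integral_add ((keySin (n+1) θ).const_mul _) ((keySin (n-1) θ).const_mul _),
      intervalIntegral.integral_const_mul, intervalIntegral.integral_const_mul,
      keySinVal, keySinVal]
  rw [L0]
  rw [hil_inner θ _ P Q hF hPint hQint, IPval, IQval]
  rw [show (∫ φ in (0:ℝ)..(2*π), σ φ) = 0 from integral_cos_period n hn]
  rw [if_neg (by omega : ¬ n+1 = 0), c1, c2]
  have h1 : Real.cos ((n:ℝ)*θ) = Real.cos (((n:ℝ)+1)*θ) * Real.cos θ + Real.sin (((n:ℝ)+1)*θ) * Real.sin θ := by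
    rw [← Real.cos_sub]; congr 1; ring
  have h2 : Real.cos ((n:ℝ)*θ) = Real.cos (((n:ℝ)-1)*θ) * Real.cos θ - Real.sin (((n:ℝ)-1)*θ) * Real.sin θ := by
    rw [← Real.cos_add]; congr 1; ring
  have hπ : (π:ℝ) ≠ 0 := Real.pi_ne_zero
  rcases Nat.lt_or_ge n 2 with h | h
  · have hn1 : n = 1 := by omega
    subst hn1
    rw [if_pos (by norm_num)]
    push_cast at h1 h2 ⊢
    field_simp
    simp only [one_mul] at h1 h2 ⊢
    linear_combination (norm := ring_nf) (π * 16) * h1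
  · rw [if_neg (by omega : ¬ n-1 = 0)]
    push_cast at h1 h2 ⊢
    field_simp
    linear_combination (norm := ring_nf) (8*π*((n:ℝ)+1)) * h1 + (8*π*((n:ℝ)-1)) * h2

lemma case_one (θ : ℝ) : L0 (fun _ => (1:ℝ)) θ = 0 := by
  set σ : ℝ → ℝ := fun _ => (1:ℝ) with hσ
  set σd : ℝ → ℝ := fun _ => (0:ℝ) with hσd
  have hder : ∀ x, HasDerivAt σ (σd x) x := fun x => hasDerivAt_const x 1
  set P : ℝ → ℝ := fun φ => -(σd φ * Real.sin φ) - σ φ * Real.cos φ with hP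
  set Q : ℝ → ℝ := fun φ => σd φ * Real.cos φ - σ φ * Real.sin φ with hQ
  have hF : ∀ φ, (fun φ => deriv (fun ψ => σ ψ • dXc ψ) φ) φ
      = (WithLp.equiv 2 (Fin 2 → ℝ)).symm ![P φ, Q φ] := derivF σ σd hder
  have funP : (fun t => Real.cot (t/2) * (P (θ-t) - P (θ+t)))
      = fun t => (-1 : ℝ) * (Real.cot (t/2) * (Real.cos (((1:ℕ):ℝ)*(θ-t)) - Real.cos (((1:ℕ):ℝ)*(θ+t)))) := by
    funext t
    simp only [hP, hσ, hσd]
    push_cast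
    ring_nf
  have funQ : (fun t => Real.cot (t/2) * (Q (θ-t) - Q (θ+t)))
      = fun t => (-1 : ℝ) * (Real.cot (t/2) * (Real.sin (((1:ℕ):ℝ)*(θ-t)) - Real.sin (((1:ℕ):ℝ)*(θ+t)))) := by
    funext t
    simp only [hQ, hσ, hσd]
    push_cast
    ring_nf
  have hPint : IntervalIntegrable (fun t => Real.cot (t/2) * (P (θ-t) - P (θ+t))) volume 0 π := by
    rw [funP]; exact (keyCos 1 θ).const_mul _
  have hQint : IntervalIntegrable (fun t => Real.cot (t/2) * (Q (θ-t) - Q (θ+t))) volume 0 π := by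
    rw [funQ]; exact (keySin 1 θ).const_mul _
  have IPval : ∫ t in (0:ℝ)..π, Real.cot (t/2) * (P (θ-t) - P (θ+t))
      = (-1 : ℝ) * (2 * π * Real.sin (((1:ℕ):ℝ)*θ) * (if (1:ℕ) = 0 then 0 else 1)) := by
    rw [funP, intervalIntegral.integral_const_mul, keyCosVal]
  have IQval : ∫ t in (0:ℝ)..π, Real.cot (t/2) * (Q (θ-t) - Q (θ+t))
      = (-1 : ℝ) * (-2 * π * Real.cos (((1:ℕ):ℝ)*θ) * (if (1:ℕ) = 0 then 0 else 1)) := by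
    rw [funQ, intervalIntegral.integral_const_mul, keySinVal]
  rw [L0]
  rw [hil_inner θ _ P Q hF hPint hQint, IPval, IQval]
  rw [show (∫ φ in (0:ℝ)..(2*π), σ φ) = 2*π by
    by_cases h : (2:ℝ)*π = 2*π <;> simp [hσ, mul_comm]]
  have hπ : (π:ℝ) ≠ 0 := Real.pi_ne_zero
  have hpy := Real.sin_sq_add_cos_sq θ
  norm_num
  field_simp
  linear_combination (-8) * hpy

/-- for every `n ≥ 1`, `L₀(sin nθ) = −(n/4)sin nθ` and
`L₀(cos nθ) = −(n/4)cos nθ`; also `L₀1 = 0`. -/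
theorem stmt13 :
    (∀ n : ℕ, 1 ≤ n → ∀ θ : ℝ,
      L0 (fun φ => Real.sin (n * φ)) θ = -((n : ℝ) / 4) * Real.sin (n * θ) ∧
      L0 (fun φ => Real.cos (n * φ)) θ = -((n : ℝ) / 4) * Real.cos (n * θ)) ∧
    (∀ θ : ℝ, L0 (fun _ => 1) θ = 0) :=
  ⟨fun n hn θ => ⟨case_sin n hn θ, case_cos n hn θ⟩, case_one⟩

end
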